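/- (Cone Differentiation Theorem.) For every integrable function f : ℝⁿ → ℝ, for Lebesgue-almost every x ∈ ℝⁿ, the averages V_{t,…,t}(x) (all scales equal to t) converge to f(x) as t → 0⁺; that is, f(x) = lim_{t → 0⁺} (1/(tⁿ |det(v₁,…,vₙ)|)) · Σ_{α ∈ {−1/2,1/2}ⁿ} sgn(α₁⋯αₙ) F(x + t(α₁v₁ + ⋯ + αₙvₙ)) for almost every x. -/

import Mathlib

open MeasureTheory Filter Set
open scoped Topology

/-- The negative cone at `z` with respect to the basis vectors `v`. -/
def negCone (n : ℕ) (v : Fin n → (Fin n → ℝ)) (z : Fin n → ℝ) : Set (Fin n → ℝ) :=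
  {y | ∃ c : Fin n → ℝ, (∀ i, 0 ≤ c i) ∧ y = z - ∑ i, c i • v i}

/-- The cone integral `F(z) = ∫_{C(z)} f dμ`. -/
noncomputable def coneIntegral (n : ℕ) (v : Fin n → (Fin n → ℝ)) (f : (Fin n → ℝ) → ℝ)
    (z : Fin n → ℝ) : ℝ :=
  ∫ y in negCone n v z, f y

namespace ConeDiffAux

variable {n : ℕ}

lemma prod_ite_one_zero {p : Fin n → Prop} [DecidablePred p] [Decidable (∀ i, p i)] :
    (∏ i, if p i then (1:ℝ) else 0) = if ∀ i, p i then 1 else 0 := by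
  by_cases h : ∀ i, p i
  · rw [if_pos h]
    exact Finset.prod_eq_one fun i _ => if_pos (h i)
  · rw [if_neg h]
    push_neg at h
    obtain ⟨i, hi⟩ := h
    exact Finset.prod_eq_zero (Finset.mem_univ i) (if_neg hi)

/-- Pointwise inclusion–exclusion identity for corner indicator functions. -/
lemma indicator_corner_sum (a b y : Fin n → ℝ) (hab : ∀ i, a i ≤ b i) :
    ∑ s : Fin n → Bool, (∏ i, if s i then (1:ℝ) else -1) *
        (if ∀ i, y i ≤ (if s i then b i else a i) then (1:ℝ) else 0)
      = if ∀ i, y i ∈ Set.Ioc (a i) (b i) then 1 else 0 := by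
  have key : ∀ i : Fin n,
      (∑ j : Bool, (if j then (if y i ≤ b i then (1:ℝ) else 0)
        else -(if y i ≤ a i then (1:ℝ) else 0)))
      = if y i ∈ Set.Ioc (a i) (b i) then 1 else 0 := by
    intro i
    rcases le_or_gt (y i) (a i) with h | h
    · have hb : y i ≤ b i := h.trans (hab i)
      simp [h, hb, Set.mem_Ioc, not_lt.mpr h]
    · by_cases hb : y i ≤ b i <;> simp [hb, not_le.mpr h, Set.mem_Ioc, h]
  have expand : ∀ s : Fin n → Bool,
      (∏ i, if s i then (1:ℝ) else -1) *
        (if ∀ i, y i ≤ (if s i then b i else a i) then (1:ℝ) else 0)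
      = ∏ i, (if s i then (if y i ≤ b i then (1:ℝ) else 0)
          else -(if y i ≤ a i then (1:ℝ) else 0)) := by
    intro s
    rw [← prod_ite_one_zero, ← Finset.prod_mul_distrib]
    refine Finset.prod_congr rfl fun i _ => ?_
    by_cases hs : s i
    · simp [hs]
    · by_cases h2 : y i ≤ a i <;> simp [hs, h2]
  simp_rw [expand]
  rw [← Fintype.prod_sum (fun i (j : Bool) => if j then (if y i ≤ b i then (1:ℝ) else 0)
      else -(if y i ≤ a i then (1:ℝ) else 0))]
  simp_rw [key]
  exact prod_ite_one_zero

/-- Integral form of the inclusion–exclusion identity. -/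
lemma sum_integral_corner (g : (Fin n → ℝ) → ℝ) (hg : Integrable g)
    (a b : Fin n → ℝ) (hab : ∀ i, a i ≤ b i) :
    ∑ s : Fin n → Bool, (∏ i, if s i then (1:ℝ) else -1) *
        (∫ y in Set.Iic (fun i => if s i then b i else a i), g y)
      = ∫ y in Set.univ.pi (fun i => Set.Ioc (a i) (b i)), g y := by
  classical
  have hIic : ∀ c : Fin n → ℝ, MeasurableSet (Set.Iic c) := fun c => by
    rw [← Set.pi_univ_Iic]; exact MeasurableSet.univ_pi fun i => measurableSet_Iic
  have hbox : MeasurableSet (Set.univ.pi fun i => Set.Ioc (a i) (b i)) :=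
    MeasurableSet.univ_pi fun i => measurableSet_Ioc
  rw [← integral_indicator hbox]
  have hterm : ∀ s : Fin n → Bool,
      (∏ i, if s i then (1:ℝ) else -1) *
        (∫ y in Set.Iic (fun i => if s i then b i else a i), g y)
      = ∫ y, (∏ i, if s i then (1:ℝ) else -1) *
          (Set.Iic (fun i => if s i then b i else a i)).indicator g y := by
    intro s
    rw [integral_const_mul, integral_indicator (hIic _)]
  simp_rw [hterm]
  rw [← integral_finset_sum _ (fun s _ => ((hg.indicator (hIic _)).const_mul _))]
  refine integral_congr_ae (Filter.Eventually.of_forall fun y => ?_)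
  have ind1 : ∀ s : Fin n → Bool,
      (Set.Iic (fun i => if s i then b i else a i)).indicator g y
      = (if ∀ i, y i ≤ (if s i then b i else a i) then (1:ℝ) else 0) * g y := by
    intro s
    by_cases h : ∀ i, y i ≤ (if s i then b i else a i)
    · rw [Set.indicator_of_mem (by exact h), if_pos h, one_mul]
    · rw [Set.indicator_of_notMem (by exact h), if_neg h, zero_mul]
  have ind2 : (Set.univ.pi (fun i => Set.Ioc (a i) (b i))).indicator g y
      = (if ∀ i, y i ∈ Set.Ioc (a i) (b i) then (1:ℝ) else 0) * g y := by
    by_cases h : ∀ i, y i ∈ Set.Ioc (a i) (b i)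
    · rw [Set.indicator_of_mem (by simpa using h), if_pos h, one_mul]
    · rw [Set.indicator_of_notMem (by simpa using h), if_neg h, zero_mul]
  simp_rw [ind1, ind2, ← mul_assoc, ← Finset.sum_mul]
  rw [indicator_corner_sum a b y hab]

end ConeDiffAux

open ConeDiffAux in
/-- Cone Differentiation Theorem: the symmetric averages `V_{t,…,t}(x)` built from the
alternating corner sums of `F` converge to `f(x)` as `t → 0⁺`, for a.e. `x`. -/
theorem stmt1 (n : ℕ) (v : Fin n → (Fin n → ℝ)) (hv : LinearIndependent ℝ v)
    (f : (Fin n → ℝ) → ℝ) (hf : Integrable f) :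
    ∀ᵐ x : Fin n → ℝ, Tendsto (fun t : ℝ =>
        (1 / (t ^ n * |(Matrix.of v).det|)) *
          ∑ s : Fin n → Bool, (∏ i, if s i then (1:ℝ) else -1) *
            coneIntegral n v f (x + t • ∑ i, (if s i then (1:ℝ)/2 else -1/2) • v i))
      (𝓝[>] 0) (𝓝 (f x)) := by
  classical
  set P : (Fin n → ℝ) → Prop := fun x => Tendsto (fun t : ℝ =>
        (1 / (t ^ n * |(Matrix.of v).det|)) *
          ∑ s : Fin n → Bool, (∏ i, if s i then (1:ℝ) else -1) *
            coneIntegral n v f (x + t • ∑ i, (if s i then (1:ℝ)/2 else -1/2) • v i))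
      (𝓝[>] 0) (𝓝 (f x)) with hPdef
  show ∀ᵐ x : Fin n → ℝ, P x
  set M : Matrix (Fin n) (Fin n) ℝ := Matrix.transpose (Matrix.of v) with hMdef
  have hvunit : IsUnit (Matrix.of v) := Matrix.linearIndependent_rows_iff_isUnit.mp hv
  have hdet0 : (Matrix.of v).det ≠ 0 :=
    isUnit_iff_ne_zero.mp ((Matrix.isUnit_iff_isUnit_det _).mp hvunit)
  have hMdet : M.det = (Matrix.of v).det := Matrix.det_transpose _
  set T : (Fin n → ℝ) →ₗ[ℝ] (Fin n → ℝ) := Matrix.toLin' M with hTdef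
  have hTdet : LinearMap.det T = (Matrix.of v).det := by
    rw [hTdef, LinearMap.det_toLin', hMdet]
  have hT : ∀ c : Fin n → ℝ, T c = ∑ i, c i • v i := by
    intro c
    funext j
    simp only [hTdef, Matrix.toLin'_apply, Matrix.mulVec, dotProduct, hMdef,
      Matrix.transpose_apply, Matrix.of_apply, Finset.sum_apply, Pi.smul_apply, smul_eq_mul]
    exact Finset.sum_congr rfl fun i _ => mul_comm _ _
  have hMunit : IsUnit M := by
    rw [Matrix.isUnit_iff_isUnit_det, hMdet]; exact isUnit_iff_ne_zero.mpr hdet0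
  have hTinj : Function.Injective T := by
    have h := Matrix.mulVec_injective_iff_isUnit.mpr hMunit
    intro x y hxy
    apply h
    simpa [hTdef, Matrix.toLin'_apply] using hxy
  set L : (Fin n → ℝ) →L[ℝ] (Fin n → ℝ) := LinearMap.toContinuousLinearMap T with hLdef
  have hLdet : L.det = (Matrix.of v).det := by
    rw [← hTdet]
    simp [hLdef, ContinuousLinearMap.det]
  -- the cone at `T w` is the image of `Iic w`
  have hcone : ∀ w : Fin n → ℝ, negCone n v (T w) = T '' Set.Iic w := by
    intro w
    ext y
    constructor
    · rintro ⟨c, hc, rfl⟩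
      refine ⟨w - c, ?_, ?_⟩
      · intro i
        exact sub_le_self _ (hc i)
      · rw [map_sub, hT c]
    · rintro ⟨u, hu, rfl⟩
      refine ⟨w - u, fun i => sub_nonneg.mpr (hu i), ?_⟩
      rw [← hT (w - u), map_sub]
      abel
  set g : (Fin n → ℝ) → ℝ := fun y => f (T y) with hgdef
  have hIicm : ∀ c : Fin n → ℝ, MeasurableSet (Set.Iic c) := fun c => by
    rw [← Set.pi_univ_Iic]; exact MeasurableSet.univ_pi fun i => measurableSet_Iic
  have hconeInt : ∀ w : Fin n → ℝ,
      coneIntegral n v f (T w) = |(Matrix.of v).det| * ∫ y in Set.Iic w, g y := by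
    intro w
    have hder : ∀ x ∈ Set.Iic w, HasFDerivWithinAt (⇑T) L (Set.Iic w) x := by
      intro x _
      have : HasFDerivAt (⇑L) L x := L.hasFDerivAt
      rw [LinearMap.coe_toContinuousLinearMap'] at this
      exact this.hasFDerivWithinAt
    have hchg := integral_image_eq_integral_abs_det_fderiv_smul volume (hIicm w)
      hder hTinj.injOn f
    rw [coneIntegral, hcone w, hchg]
    simp only [hLdet, smul_eq_mul]
    rw [integral_const_mul]
  -- integrability of g
  have hmapT : Measure.map T volume = ENNReal.ofReal |(LinearMap.det T)⁻¹| • volume :=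
    Real.map_linearMap_volume_pi_eq_smul_volume_pi (by rw [hTdet]; exact hdet0)
  have hTmeas : Measurable T := L.continuous.measurable
  have hg_int : Integrable g := by
    have h1 : Integrable f (Measure.map T volume) := by
      rw [hmapT]
      exact hf.smul_measure ENNReal.ofReal_ne_top
    exact (integrable_map_measure h1.aestronglyMeasurable hTmeas.aemeasurable).mp h1
  -- Lebesgue differentiation in the straightened coordinates
  have hae : ∀ᵐ w : Fin n → ℝ, Tendsto (fun t : ℝ => ⨍ y in Metric.closedBall w (t/2), g y)
      (𝓝[>] (0:ℝ)) (𝓝 (g w)) := by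
    filter_upwards [IsUnifLocDoublingMeasure.ae_tendsto_average (μ := volume)
      hg_int.locallyIntegrable 1] with w hw
    have hδ : Tendsto (fun t : ℝ => t/2) (𝓝[>] (0:ℝ)) (𝓝[>] (0:ℝ)) := by
      apply tendsto_nhdsWithin_of_tendsto_nhds_of_eventually_within
      · have : Tendsto (fun t : ℝ => t/2) (𝓝 (0:ℝ)) (𝓝 ((0:ℝ)/2)) :=
          (continuous_id.div_const 2).tendsto 0
        simpa using this.mono_left nhdsWithin_le_nhds
      · filter_upwards [self_mem_nhdsWithin] with t ht
        exact half_pos (show (0:ℝ) < t from ht)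
    have hmem : ∀ᶠ t : ℝ in 𝓝[>] (0:ℝ), w ∈ Metric.closedBall w (1 * (t/2)) := by
      filter_upwards [self_mem_nhdsWithin] with t ht
      have ht0 : (0:ℝ) < t := ht
      exact Metric.mem_closedBall_self (by linarith)
    exact hw (fun _ => w) (fun t => t/2) hδ hmem
  -- the key pointwise computation
  have main : ∀ w : Fin n → ℝ,
      Tendsto (fun t : ℝ => ⨍ y in Metric.closedBall w (t/2), g y)
        (𝓝[>] (0:ℝ)) (𝓝 (g w)) → P (T w) := by
    intro w hw
    have hfg : f (T w) = g w := rfl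
    rw [hPdef]
    simp only
    rw [hfg]
    refine hw.congr' ?_
    filter_upwards [self_mem_nhdsWithin] with t ht
    have ht0 : (0:ℝ) < t := ht
    set a : Fin n → ℝ := fun i => w i - t/2 with hadef
    set b : Fin n → ℝ := fun i => w i + t/2 with hbdef
    have hab : ∀ i, a i ≤ b i := fun i => by
      simp only [hadef, hbdef]; linarith
    have harg : ∀ s : Fin n → Bool,
        T w + t • ∑ i, (if s i then (1:ℝ)/2 else -1/2) • v i
        = T (fun i => if s i then b i else a i) := by
      intro s
      have hcorn : (fun i => if s i then b i else a i)
          = w + t • (fun i => if s i then (1:ℝ)/2 else -1/2) := by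
        funext i
        by_cases hs : s i <;> simp [hs, hadef, hbdef] <;> ring
      rw [hcorn, map_add, _root_.map_smul, hT (fun i => if s i then (1:ℝ)/2 else -1/2)]
    have hsum : ∑ s : Fin n → Bool, (∏ i, if s i then (1:ℝ) else -1) *
        coneIntegral n v f (T w + t • ∑ i, (if s i then (1:ℝ)/2 else -1/2) • v i)
        = |(Matrix.of v).det| * ∫ y in Set.univ.pi (fun i => Set.Ioc (a i) (b i)), g y := by
      rw [← sum_integral_corner g hg_int a b hab, Finset.mul_sum]
      refine Finset.sum_congr rfl fun s _ => ?_
      rw [harg s, hconeInt]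
      ring
    have hball : Metric.closedBall w (t/2) = Set.Icc a b := by
      rw [closedBall_pi _ (by positivity), ← Set.pi_univ_Icc]
      refine Set.pi_congr rfl fun i _ => ?_
      rw [Real.closedBall_eq_Icc]
    have hbox_ball : ∫ y in Set.univ.pi (fun i => Set.Ioc (a i) (b i)), g y
        = ∫ y in Metric.closedBall w (t/2), g y := by
      rw [hball]
      refine setIntegral_congr_set ?_
      have h := MeasureTheory.Measure.univ_pi_Ioc_ae_eq_Icc
        (μ := fun _ : Fin n => (volume : Measure ℝ)) (f := a) (g := b)
      rwa [← volume_pi] at h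
    have hvol : (volume (Metric.closedBall w (t/2))).toReal = t ^ n := by
      rw [closedBall_pi _ (by positivity), volume_pi_pi]
      simp only [Real.volume_closedBall]
      rw [Finset.prod_const]
      have : (2 : ℝ) * (t/2) = t := by ring
      rw [this, Finset.card_univ, Fintype.card_fin, ENNReal.toReal_pow,
        ENNReal.toReal_ofReal ht0.le]
    rw [setAverage_eq, measureReal_def, hvol, hsum, hbox_ball]
    have htn : (t : ℝ) ^ n ≠ 0 := pow_ne_zero _ ht0.ne'
    have habs : |(Matrix.of v).det| ≠ 0 := abs_ne_zero.mpr hdet0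
    rw [smul_eq_mul]
    field_simp
  have hae2 : ∀ᵐ w : Fin n → ℝ, P (T w) := by
    filter_upwards [hae] with w hw using main w hw
  -- transfer the a.e. statement through T
  have hTsurj : Function.Surjective T :=
    (LinearMap.injective_iff_surjective).mp hTinj
  set e : (Fin n → ℝ) ≃ₗ[ℝ] (Fin n → ℝ) := LinearEquiv.ofBijective T ⟨hTinj, hTsurj⟩ with hedef
  have hnull : volume (T ⁻¹' {x | ¬ P x}) = 0 := hae2
  obtain ⟨Z, hZsub, hZmeas, hZnull⟩ := exists_measurable_superset_of_null hnull
  have hsub : {x | ¬ P x} ⊆ ⇑e.symm ⁻¹' Z := by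
    intro x hx
    have : e.symm x ∈ T ⁻¹' {x | ¬ P x} := by
      show P (T (e.symm x)) → False
      have : T (e.symm x) = x := e.apply_symm_apply x
      rw [this]
      exact hx
    exact hZsub this
  have hesymm_det : LinearMap.det (e.symm : (Fin n → ℝ) →ₗ[ℝ] (Fin n → ℝ)) ≠ 0 :=
    (LinearEquiv.isUnit_det' e.symm).ne_zero
  have hmape : Measure.map (e.symm : (Fin n → ℝ) →ₗ[ℝ] (Fin n → ℝ)) volume
      = ENNReal.ofReal |(LinearMap.det (e.symm : (Fin n → ℝ) →ₗ[ℝ] (Fin n → ℝ)))⁻¹| • volume :=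
    Real.map_linearMap_volume_pi_eq_smul_volume_pi hesymm_det
  have hesymm_meas : Measurable (e.symm : (Fin n → ℝ) →ₗ[ℝ] (Fin n → ℝ)) :=
    (LinearMap.toContinuousLinearMap
      (e.symm : (Fin n → ℝ) →ₗ[ℝ] (Fin n → ℝ))).continuous.measurable
  have hZ' : volume (⇑e.symm ⁻¹' Z) = 0 := by
    have : volume (⇑(e.symm : (Fin n → ℝ) →ₗ[ℝ] (Fin n → ℝ)) ⁻¹' Z)
        = Measure.map (e.symm : (Fin n → ℝ) →ₗ[ℝ] (Fin n → ℝ)) volume Z :=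
      (Measure.map_apply hesymm_meas hZmeas).symm
    rw [show (⇑e.symm ⁻¹' Z) = (⇑(e.symm : (Fin n → ℝ) →ₗ[ℝ] (Fin n → ℝ)) ⁻¹' Z) from rfl,
      this, hmape]
    simp [hZnull]
  rw [ae_iff]
  exact measure_mono_null hsub hZ'
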